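/- Let A be an L-ML-algebra. For every a ∈ A, ⟨R_□⟩⟨T₁(a) → 0⟩ = ⟨□T₁(a) → 0⟩, i.e., {W ∈ Hom(A,L) : ∃φ, W R_□ φ and φ(T₁(a) → 0) = 1} = {W ∈ Hom(A,L) : W(□T₁(a) → 0) = 1}; consequently [R_□]⟨a⟩ = {W ∈ Hom(A,L) : ∀φ, W R_□ φ implies φ(a) = 1} belongs to β₁ = τ₁ ∩ {τ₂-closed sets}. -/

import Mathlib

open Topology TopologicalSpace Set

section Bitop

variable {X Y : Type*}

/-- A bitopological space `(X, t1, t2)` is pairwise Hausdorff if distinct points can be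
separated by disjoint sets, one `t1`-open and one `t2`-open. -/
def PairwiseHausdorff (t1 t2 : TopologicalSpace X) : Prop :=
  ∀ x y : X, x ≠ y → ∃ U V : Set X,
    IsOpen[t1] U ∧ IsOpen[t2] V ∧ x ∈ U ∧ y ∈ V ∧ Disjoint U V

/-- `beta1 t1 t2` is the family of sets that are `t1`-open and `t2`-closed. -/
def beta1 (t1 t2 : TopologicalSpace X) : Set (Set X) :=
  {U : Set X | IsOpen[t1] U ∧ IsClosed[t2] U}

/-- Pairwise zero-dimensional: `β₁` is a basis for `t1` and `β₂ = beta1 t2 t1` is a basis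
for `t2`. -/
def PairwiseZeroDim (t1 t2 : TopologicalSpace X) : Prop :=
  @IsTopologicalBasis X t1 (beta1 t1 t2) ∧ @IsTopologicalBasis X t2 (beta1 t2 t1)

/-- Pairwise compact: the join topology is compact. -/
def PairwiseCompact (t1 t2 : TopologicalSpace X) : Prop :=
  @CompactSpace X (t1 ⊔ t2)

/-- A pairwise Boolean space. -/
def PairwiseBoolean (t1 t2 : TopologicalSpace X) : Prop :=
  PairwiseHausdorff t1 t2 ∧ PairwiseZeroDim t1 t2 ∧ PairwiseCompact t1 t2

/-- Pairwise continuous maps between bitopological spaces. -/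
def PairwiseContinuous (t1 t2 : TopologicalSpace X) (s1 s2 : TopologicalSpace Y)
    (f : X → Y) : Prop :=
  Continuous[t1, s1] f ∧ Continuous[t2, s2] f

/-- `KSet t1 t2` is the collection of pairwise closed (i.e. closed in the join topology)
subsets of `X`. -/
abbrev KSet (t1 t2 : TopologicalSpace X) : Type _ :=
  {C : Set X // IsClosed[t1 ⊔ t2] C}

/-- `vbox t1 t2 U = {C ∈ K(S) : C ⊆ U}`. -/
def vbox (t1 t2 : TopologicalSpace X) (U : Set X) : Set (KSet t1 t2) :=
  {C : KSet t1 t2 | C.1 ⊆ U}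

/-- `vdia t1 t2 U = {C ∈ K(S) : C ∩ U ≠ ∅}`. -/
def vdia (t1 t2 : TopologicalSpace X) (U : Set X) : Set (KSet t1 t2) :=
  {C : KSet t1 t2 | (C.1 ∩ U).Nonempty}

/-- The topology on `K(S)` generated by the subbasis `{□U, ◇U : U ∈ B}`. -/
def tauV (t1 t2 : TopologicalSpace X) (B : Set (Set X)) : TopologicalSpace (KSet t1 t2) :=
  generateFrom ((vbox t1 t2 '' B) ∪ (vdia t1 t2 '' B))

/-- The first Vietoris topology `τ₁ᵛ`, with subbasis `{□U, ◇U : U ∈ β₁}`. -/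
def tau1V (t1 t2 : TopologicalSpace X) : TopologicalSpace (KSet t1 t2) :=
  tauV t1 t2 (beta1 t1 t2)

/-- The second Vietoris topology `τ₂ᵛ`, with subbasis `{□U, ◇U : U ∈ β₂}`. -/
def tau2V (t1 t2 : TopologicalSpace X) : TopologicalSpace (KSet t1 t2) :=
  tauV t1 t2 (beta1 t2 t1)

end Bitop

/-- The infimum of a subset of a finite lattice with top. -/
noncomputable def infSet {L : Type*} [Fintype L] [SemilatticeInf L] [OrderTop L]
    (s : Set L) : L :=
  letI : DecidablePred (· ∈ s) := fun _ => Classical.propDecidable _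
  (Finset.univ.filter (· ∈ s)).inf id

section Algebra

variable {L : Type*} [HeytingAlgebra L] [Fintype L] [DecidableEq L]

/-- The canonical operation `T_ℓ` on `L` itself: `T_ℓ(x) = 1` if `x = ℓ`, else `0`. -/
def Tcan (l x : L) : L := if x = l then ⊤ else ⊥

variable {A : Type*} [HeytingAlgebra A]

/-- An `L`-`VL`-algebra structure on the Heyting algebra `A` via operations `T : L → A → A`. -/
structure IsLVL (T : L → A → A) : Prop where
  ax_ops : ∀ (l1 l2 : L) (a b : A),
    T l1 a ⊓ T l2 b ≤ T (l1 ⇨ l2) (a ⇨ b) ⊓ T (l1 ⊓ l2) (a ⊓ b) ⊓ T (l1 ⊔ l2) (a ⊔ b)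
  ax_TT : ∀ (l1 l2 : L) (a : A), T l2 a ≤ T (Tcan l1 l2) (T l1 a)
  ax_bot_bot : T ⊥ (⊥ : A) = ⊤
  ax_bot : ∀ l : L, l ≠ ⊥ → T l (⊥ : A) = ⊥
  ax_top_top : T ⊤ (⊤ : A) = ⊤
  ax_top : ∀ l : L, l ≠ ⊤ → T l (⊤ : A) = ⊥
  ax_sup : ∀ a : A, (Finset.univ.sup fun l : L => T l a) = ⊤
  ax_or : ∀ (l1 l2 : L) (a : A), T l1 a ⊔ (T l2 a ⇨ ⊥) = ⊤
  ax_disj : ∀ (l1 l2 : L) (a : A), l1 ≠ l2 → T l1 a ⊓ T l2 a = ⊥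
  ax_T1T : ∀ (l : L) (a : A), T ⊤ (T l a) = T l a
  ax_T0T : ∀ (l : L) (a : A), T ⊥ (T l a) = T l a ⇨ ⊥
  ax_Tmid : ∀ (l l2 : L) (a : A), l2 ≠ ⊥ → l2 ≠ ⊤ → T l2 (T l a) = ⊥
  ax_T1_le : ∀ a : A, T ⊤ a ≤ a
  ax_T1_inf : ∀ a b : A, T ⊤ (a ⊓ b) = T ⊤ a ⊓ T ⊤ b
  ax_sep : ∀ a b : A,
    (Finset.univ.inf fun l : L => (T l a ⇨ T l b) ⊓ (T l b ⇨ T l a)) ≤ (a ⇨ b) ⊓ (b ⇨ a)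

/-- A map `A → L` preserving `∨, ∧, →, 0, 1` and every `T_ℓ`. -/
def IsHom (T : L → A → A) (h : A → L) : Prop :=
  (∀ a b : A, h (a ⊔ b) = h a ⊔ h b) ∧ (∀ a b : A, h (a ⊓ b) = h a ⊓ h b) ∧
  (∀ a b : A, h (a ⇨ b) = h a ⇨ h b) ∧ h ⊥ = ⊥ ∧ h ⊤ = ⊤ ∧
  (∀ (l : L) (a : A), h (T l a) = Tcan l (h a))

/-- `Hom(A, L)`, the set of `L`-`VL`-homomorphisms `A → L`. -/
abbrev HomL (T : L → A → A) : Type _ := {h : A → L // IsHom T h}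

/-- `⟨a⟩ = {h ∈ Hom(A,L) : h(a) = 1}`. -/
def bOpen (T : L → A → A) (a : A) : Set (HomL T) := {h : HomL T | h.1 a = ⊤}

/-- The topology `τ₁` on `Hom(A,L)` with basis `{⟨a⟩ : a ∈ A}`. -/
def tauH1 (T : L → A → A) : TopologicalSpace (HomL T) :=
  generateFrom (Set.range (bOpen T))

/-- The topology `τ₂` on `Hom(A,L)` with basis `{⟨a⟩ᶜ : a ∈ A}`. -/
def tauH2 (T : L → A → A) : TopologicalSpace (HomL T) :=
  generateFrom (Set.range fun a : A => (bOpen T a)ᶜ)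

/-- `U_ℓ(a) = ⋁ {T_{ℓ'}(a) : ℓ ≤ ℓ'}`. -/
noncomputable def Ucan (T : L → A → A) (l : L) (a : A) : A :=
  letI : DecidablePred fun l' : L => l ≤ l' := fun _ => Classical.propDecidable _
  (Finset.univ.filter fun l' : L => l ≤ l').sup fun l' : L => T l' a

/-- An `L`-`ML`-algebra: an `L`-`VL`-algebra with a modal operator. -/
structure IsLML (T : L → A → A) (Box : A → A) : Prop where
  toLVL : IsLVL T
  box_inf : ∀ a b : A, Box (a ⊓ b) = Box a ⊓ Box b
  box_U : ∀ (l : L) (a : A), Box (Ucan T l a) = Ucan T l (Box a)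

/-- The canonical relation `R_□` on maps `A → L`:
`ψ R_□ φ` iff `∀ ℓ a, ℓ ≤ ψ(□a) → ℓ ≤ φ(a)`. -/
def Rbox (Box : A → A) (ψ φ : A → L) : Prop :=
  ∀ (l : L) (a : A), l ≤ ψ (Box a) → l ≤ φ a

end Algebra


section MyAux
variable {L : Type*} [HeytingAlgebra L] [Fintype L] [DecidableEq L]
variable {A : Type*} [HeytingAlgebra A]

/-- proper filters -/
def IsPF (S : Set A) : Prop :=
  ⊤ ∈ S ∧ (∀ ⦃x y : A⦄, x ∈ S → x ≤ y → y ∈ S) ∧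
    (∀ ⦃x y : A⦄, x ∈ S → y ∈ S → x ⊓ y ∈ S) ∧ ⊥ ∉ S

lemma IsPF.finsetInf {S : Set A} (hS : IsPF S) {ι : Type*} [DecidableEq ι]
    (s : Finset ι) (f : ι → A) (h : ∀ i ∈ s, f i ∈ S) : s.inf f ∈ S := by
  induction s using Finset.induction_on with
  | empty => simpa using hS.1
  | insert _ _ hx ih =>
    rw [Finset.inf_insert]
    exact hS.2.2.1 (h _ (Finset.mem_insert_self _ _))
      (ih fun i hi => h i (Finset.mem_insert_of_mem hi))

lemma exists_maximal_pf {G : Set A} (hG : IsPF G) :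
    ∃ u : Set A, IsPF u ∧ G ⊆ u ∧ ∀ S : Set A, IsPF S → u ⊆ S → S = u := by
  have hZ : ∀ c ⊆ {S : Set A | IsPF S}, IsChain (· ⊆ ·) c → c.Nonempty →
      ∃ ub ∈ {S : Set A | IsPF S}, ∀ s ∈ c, s ⊆ ub := by
    intro c hc hchain ⟨s0, hs0⟩
    refine ⟨⋃₀ c, ⟨?_, ?_, ?_, ?_⟩, fun s hs => subset_sUnion_of_mem hs⟩
    · exact ⟨s0, hs0, (hc hs0).1⟩
    · rintro x y ⟨s, hs, hxs⟩ hxy; exact ⟨s, hs, (hc hs).2.1 hxs hxy⟩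
    · rintro x y ⟨s, hs, hxs⟩ ⟨t, ht, hyt⟩
      rcases hchain.total hs ht with hst | hts
      · exact ⟨t, ht, (hc ht).2.2.1 (hst hxs) hyt⟩
      · exact ⟨s, hs, (hc hs).2.2.1 hxs (hts hyt)⟩
    · rintro ⟨s, hs, hbs⟩; exact (hc hs).2.2.2 hbs
  obtain ⟨u, hGu, hu, hmax⟩ := zorn_subset_nonempty {S : Set A | IsPF S} hZ G hG
  exact ⟨u, hu, hGu, fun S hS huS => (hmax hS huS).antisymm huS⟩

lemma mem_or_compl_mem {u : Set A} (hu : IsPF u)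
    (hmax : ∀ S : Set A, IsPF S → u ⊆ S → S = u) (c : A) :
    c ∈ u ∨ cᶜ ∈ u := by
  by_cases h : c ∈ u
  · exact Or.inl h
  right
  set S : Set A := {x | ∃ f ∈ u, f ⊓ c ≤ x} with hSdef
  by_cases hb : (⊥ : A) ∈ S
  · obtain ⟨f, hf, hfc⟩ := hb
    have : f ≤ cᶜ := by rw [← himp_bot]; exact le_himp_iff.2 hfc
    exact hu.2.1 hf this
  · exfalso
    have hSpf : IsPF S := by
      refine ⟨⟨⊤, hu.1, le_top⟩, ?_, ?_, hb⟩
      · rintro x y ⟨f, hf, hfx⟩ hxy; exact ⟨f, hf, hfx.trans hxy⟩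
      · rintro x y ⟨f, hf, hfx⟩ ⟨g, hg, hgy⟩
        exact ⟨f ⊓ g, hu.2.2.1 hf hg,
          le_inf (le_trans (inf_le_inf_right _ inf_le_left) hfx)
            (le_trans (inf_le_inf_right _ inf_le_right) hgy)⟩
    have huS : u ⊆ S := fun x hx => ⟨x, hx, inf_le_left⟩
    have : S = u := hmax S hSpf huS
    exact h (this ▸ ⟨⊤, hu.1, by simp⟩)

end MyAux


set_option linter.unusedSectionVars false

section MyAux2
variable {L : Type*} [HeytingAlgebra L] [Fintype L] [DecidableEq L]
variable {A : Type*} [HeytingAlgebra A] {T : L → A → A} {Box : A → A}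

lemma Tcan_eq_top_iff (hnt : (⊥:L) ≠ ⊤) {l x : L} : Tcan l x = ⊤ ↔ x = l := by
  rw [Tcan]
  by_cases h : x = l
  · simp [h]
  · simp only [h, if_false, iff_false]
    exact fun hb => hnt hb

lemma Tcan_self (x : L) : Tcan x x = ⊤ := by simp [Tcan]

lemma hom_mono {h : A → L} (hh : IsHom T h) {x y : A} (hxy : x ≤ y) : h x ≤ h y := by
  have : h x = h (x ⊓ y) := by rw [inf_eq_left.2 hxy]
  rw [this, hh.2.1]; exact inf_le_right

lemma hom_finsetSup {h : A → L} (hh : IsHom T h) {ι : Type*} [DecidableEq ι]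
    (s : Finset ι) (f : ι → A) : h (s.sup f) = s.sup fun i => h (f i) := by
  induction s using Finset.induction_on with
  | empty => simpa using hh.2.2.2.1
  | insert _ _ hx ih => rw [Finset.sup_insert, Finset.sup_insert, hh.1, ih]

lemma Ucan_top_iff (hnt : (⊥:L) ≠ ⊤) {h : A → L} (hh : IsHom T h) (l : L) (a : A) :
    h (Ucan T l a) = ⊤ ↔ l ≤ h a := by
  classical
  unfold Ucan
  rw [hom_finsetSup hh]
  constructor
  · intro htop
    by_contra hle
    apply hnt
    rw [← htop]
    refine le_antisymm bot_le (Finset.sup_le fun l' hl' => ?_)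
    rw [hh.2.2.2.2.2, Tcan]
    have : h a ≠ l' := fun he => hle (he ▸ (Finset.mem_filter.1 hl').2)
    simp [this]
  · intro hle
    refine le_antisymm le_top ?_
    have hmem : h a ∈ Finset.univ.filter (fun l' : L => l ≤ l') :=
      Finset.mem_filter.2 ⟨Finset.mem_univ _, hle⟩
    calc (⊤ : L) = Tcan (h a) (h a) := (Tcan_self _).symm
      _ = h (T (h a) a) := (hh.2.2.2.2.2 _ _).symm
      _ ≤ _ := Finset.le_sup (f := fun l' : L => h (T l' a)) hmem

lemma Ucan_bot_eq (hV : IsLVL T) (a : A) : Ucan T ⊥ a = ⊤ := by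
  classical
  unfold Ucan
  rw [Finset.filter_true_of_mem (fun _ _ => bot_le)]
  exact hV.ax_sup a

lemma Ucan_top_eq (a : A) : Ucan T ⊤ a = T ⊤ a := by
  classical
  unfold Ucan
  have : (Finset.univ.filter fun l' : L => ⊤ ≤ l') = {⊤} := by
    ext l'; simp [top_le_iff]
  rw [this, Finset.sup_singleton]

lemma box_top (hM : IsLML T Box) : Box ⊤ = ⊤ := by
  have h := hM.box_U ⊥ ⊥
  rwa [Ucan_bot_eq hM.toLVL, Ucan_bot_eq hM.toLVL] at h

lemma box_mono (hM : IsLML T Box) {x y : A} (hxy : x ≤ y) : Box x ≤ Box y := by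
  have : Box x = Box (x ⊓ y) := by rw [inf_eq_left.2 hxy]
  rw [this, hM.box_inf]; exact inf_le_right

lemma hom_of_ultra (hV : IsLVL T) {u : Set A} (hu : IsPF u)
    (hmax : ∀ S : Set A, IsPF S → u ⊆ S → S = u) :
    ∃ φ : A → L, IsHom T φ ∧ ∀ x : A, T (φ x) x ∈ u := by
  classical
  have huniq : ∀ x : A, ∃! l : L, T l x ∈ u := by
    intro x
    have hex : ∃ l : L, T l x ∈ u := by
      by_contra hno
      push_neg at hno
      have hcompl : ∀ l : L, (T l x)ᶜ ∈ u := fun l =>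
        (mem_or_compl_mem hu hmax (T l x)).resolve_left (hno l)
      have hinf : (Finset.univ.inf fun l : L => (T l x)ᶜ) ∈ u :=
        hu.finsetInf _ _ fun l _ => hcompl l
      have hbot : (Finset.univ.inf fun l : L => (T l x)ᶜ) ≤ ⊥ := by
        calc (Finset.univ.inf fun l : L => (T l x)ᶜ)
            = (Finset.univ.inf fun l : L => (T l x)ᶜ) ⊓ ⊤ := (inf_top_eq _).symm
          _ = (Finset.univ.inf fun l : L => (T l x)ᶜ) ⊓
              (Finset.univ.sup fun l : L => T l x) := by rw [hV.ax_sup]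
          _ = Finset.univ.sup fun l : L =>
              (Finset.univ.inf fun l' : L => (T l' x)ᶜ) ⊓ T l x :=
            Finset.sup_inf_distrib_left _ _ _
          _ ≤ ⊥ := Finset.sup_le fun l _ =>
              le_trans (inf_le_inf_right _ (Finset.inf_le (Finset.mem_univ l)))
                (by rw [compl_inf_self])
      exact absurd (hu.2.1 hinf hbot) hu.2.2.2
    obtain ⟨l, hl⟩ := hex
    refine ⟨l, hl, fun l' hl' => ?_⟩
    by_contra hne
    exact hu.2.2.2 (hV.ax_disj l' l x hne ▸ hu.2.2.1 hl' hl)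
  set φ : A → L := fun x => (huniq x).choose with hφdef
  have key : ∀ x : A, T (φ x) x ∈ u := fun x => (huniq x).choose_spec.1
  have uniq : ∀ {x : A} {l : L}, T l x ∈ u → φ x = l := fun {x l} h =>
    ((huniq x).choose_spec.2 l h).symm
  have hproj1 : ∀ (p q r : A), p ⊓ q ⊓ r ≤ p := fun _ _ _ => inf_le_left.trans inf_le_left
  have hproj2 : ∀ (p q r : A), p ⊓ q ⊓ r ≤ q := fun _ _ _ => inf_le_left.trans inf_le_right
  refine ⟨φ, ⟨?_, ?_, ?_, ?_, ?_, ?_⟩, key⟩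
  · intro a b
    exact uniq (hu.2.1 (hu.2.2.1 (key a) (key b))
      ((hV.ax_ops (φ a) (φ b) a b).trans inf_le_right))
  · intro a b
    exact uniq (hu.2.1 (hu.2.2.1 (key a) (key b))
      ((hV.ax_ops (φ a) (φ b) a b).trans (hproj2 _ _ _)))
  · intro a b
    exact uniq (hu.2.1 (hu.2.2.1 (key a) (key b))
      ((hV.ax_ops (φ a) (φ b) a b).trans (hproj1 _ _ _)))
  · exact uniq (x := (⊥:A)) (l := (⊥:L)) (by rw [hV.ax_bot_bot]; exact hu.1)
  · exact uniq (x := (⊤:A)) (l := (⊤:L)) (by rw [hV.ax_top_top]; exact hu.1)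
  · intro l a
    exact uniq (hu.2.1 (key a) (hV.ax_TT l (φ a) a))

lemma exists_phi (hM : IsLML T Box) (hnt : (⊥:L) ≠ ⊤) (W : HomL T) (a : A)
    (hWa : W.1 (Box (T ⊤ a)) = ⊥) :
    ∃ φ : HomL T, Rbox Box W.1 φ.1 ∧ φ.1 a ≠ ⊤ := by
  classical
  obtain ⟨hWsup, hWinf, hWhimp, hWbot, hWtop, hWT⟩ := W.2
  set G : Set A := {x | ∃ b : A, W.1 (Box b) = ⊤ ∧ T ⊤ b ⊓ (T ⊤ a ⇨ ⊥) ≤ x} with hGdef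
  have hboxTtop : ∀ b : A, Box (T ⊤ b) = T ⊤ (Box b) := by
    intro b
    rw [← Ucan_top_eq (T := T) b, hM.box_U, Ucan_top_eq]
  have hGpf : IsPF G := by
    refine ⟨⟨⊤, ?_, le_top⟩, ?_, ?_, ?_⟩
    · rw [box_top hM, hWtop]
    · rintro x y ⟨b, hb, hle⟩ hxy; exact ⟨b, hb, hle.trans hxy⟩
    · rintro x y ⟨b1, hb1, hle1⟩ ⟨b2, hb2, hle2⟩
      refine ⟨b1 ⊓ b2, ?_, ?_⟩
      · rw [hM.box_inf, W.2.2.1, hb1, hb2, inf_top_eq]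
      · rw [hM.toLVL.ax_T1_inf]
        exact le_inf
          (le_trans (inf_le_inf_right _ inf_le_left) hle1)
          (le_trans (inf_le_inf_right _ inf_le_right) hle2)
    · rintro ⟨b, hb, hle⟩
      have h1 : T ⊤ b ⊓ (T ⊤ a ⇨ ⊥) = ⊥ := le_antisymm hle bot_le
      have h2 : T ⊤ b ≤ T ⊤ a := by
        calc T ⊤ b = T ⊤ b ⊓ (T ⊤ a ⊔ (T ⊤ a ⇨ ⊥)) := by
              rw [hM.toLVL.ax_or ⊤ ⊤ a, inf_top_eq]
          _ = (T ⊤ b ⊓ T ⊤ a) ⊔ (T ⊤ b ⊓ (T ⊤ a ⇨ ⊥)) := inf_sup_left _ _ _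
          _ = T ⊤ b ⊓ T ⊤ a := by rw [h1, sup_bot_eq]
          _ ≤ T ⊤ a := inf_le_right
      have h3 : W.1 (Box (T ⊤ b)) = ⊤ := by
        rw [hboxTtop, hWT, hb, Tcan_self]
      have h4 : W.1 (Box (T ⊤ b)) ≤ W.1 (Box (T ⊤ a)) :=
        hom_mono ⟨hWsup, hWinf, hWhimp, hWbot, hWtop, hWT⟩ (box_mono hM h2)
      rw [h3, hWa] at h4
      exact hnt (le_antisymm bot_le h4)
  obtain ⟨u, hu, hGu, hmax⟩ := exists_maximal_pf hGpf
  obtain ⟨φ, hφhom, hkey⟩ := hom_of_ultra hM.toLVL hu hmax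
  have hca : (T ⊤ a ⇨ ⊥) ∈ u := hGu ⟨⊤, by rw [box_top hM, hWtop], inf_le_right⟩
  have hφa : φ a ≠ ⊤ := by
    intro htop
    have h1 : T ⊤ a ∈ u := htop ▸ hkey a
    have h2 : T ⊤ a ⊓ (T ⊤ a ⇨ ⊥) ≤ ⊥ := by rw [inf_himp, inf_bot_eq]
    exact hu.2.2.2 (hu.2.1 (hu.2.2.1 h1 hca) h2)
  refine ⟨⟨φ, hφhom⟩, ?_, hφa⟩
  intro l c hlc
  have h1 : W.1 (Box (Ucan T l c)) = ⊤ := by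
    rw [hM.box_U]
    exact (Ucan_top_iff hnt ⟨hWsup, hWinf, hWhimp, hWbot, hWtop, hWT⟩ l (Box c)).2 hlc
  have h2 : T ⊤ (Ucan T l c) ∈ u := hGu ⟨Ucan T l c, h1, inf_le_left⟩
  have h3 : φ (Ucan T l c) = ⊤ := by
    by_contra hne
    exact hu.2.2.2
      (hM.toLVL.ax_disj _ _ (Ucan T l c) hne ▸ hu.2.2.1 (hkey (Ucan T l c)) h2)
  exact (Ucan_top_iff hnt hφhom l c).1 h3

lemma hom_Ttop_himp (hnt : (⊥:L) ≠ ⊤) {h : A → L} (hh : IsHom T h) (x : A) :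
    h (T ⊤ x ⇨ ⊥) = ⊤ ↔ h x ≠ ⊤ := by
  rw [hh.2.2.1, hh.2.2.2.1, hh.2.2.2.2.2, himp_eq_top_iff, le_bot_iff, Tcan]
  by_cases hx : h x = ⊤
  · rw [if_pos hx]
    exact ⟨fun hb => absurd hb.symm hnt, fun hne => absurd hx hne⟩
  · rw [if_neg hx]
    exact ⟨fun _ => hx, fun _ => rfl⟩

end MyAux2

/-- For an `L`-`ML`-algebra `A` and `a ∈ A`:
`⟨R_□⟩⟨T₁(a) → 0⟩ = ⟨□T₁(a) → 0⟩`, and consequently `[R_□]⟨a⟩ ∈ β₁`. -/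
theorem statement12 {L : Type*} [HeytingAlgebra L] [Fintype L] [DecidableEq L]
    {A : Type*} [HeytingAlgebra A] (T : L → A → A) (Box : A → A)
    (hA : IsLML T Box) (a : A) :
    ({W : HomL T | ∃ φ : HomL T, Rbox Box W.1 φ.1 ∧ φ.1 (T ⊤ a ⇨ ⊥) = ⊤}
        = {W : HomL T | W.1 (Box (T ⊤ a) ⇨ ⊥) = ⊤}) ∧
    (IsOpen[tauH1 T] {W : HomL T | ∀ φ : HomL T, Rbox Box W.1 φ.1 → φ.1 a = ⊤} ∧
     IsClosed[tauH2 T] {W : HomL T | ∀ φ : HomL T, Rbox Box W.1 φ.1 → φ.1 a = ⊤}) := by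
  classical
  by_cases hnt0 : (⊥:L) = ⊤
  · -- degenerate case: L is trivial
    have hle : ∀ x y : L, x ≤ y := fun x y => le_top.trans (hnt0.ge.trans bot_le)
    have hall : ∀ x y : L, x = y := fun x y => le_antisymm (hle x y) (hle y x)
    have hU : {W : HomL T | ∀ φ : HomL T, Rbox Box W.1 φ.1 → φ.1 a = ⊤} = Set.univ :=
      Set.eq_univ_of_forall fun W φ _ => hall _ _
    refine ⟨?_, ?_, ?_⟩
    · ext W
      simp only [Set.mem_setOf_eq]
      exact ⟨fun _ => hall _ _, fun _ => ⟨W, fun l c _ => hle l _, hall _ _⟩⟩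
    · rw [hU]; exact @isOpen_univ _ (tauH1 T)
    · rw [hU]; exact @isClosed_univ _ (tauH2 T)
  have hnt : (⊥:L) ≠ ⊤ := hnt0
  set c : A := Box (T ⊤ a) with hcdef
  have hpart1 : {W : HomL T | ∃ φ : HomL T, Rbox Box W.1 φ.1 ∧ φ.1 (T ⊤ a ⇨ ⊥) = ⊤}
      = {W : HomL T | W.1 (Box (T ⊤ a) ⇨ ⊥) = ⊤} := by
    ext W
    obtain ⟨hWs, hWi, hWh, hWb, hWt, hWT⟩ := W.2
    simp only [Set.mem_setOf_eq]
    constructor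
    · rintro ⟨φ, hR, hφ⟩
      have hφa : φ.1 a ≠ ⊤ := (hom_Ttop_himp hnt φ.2 a).1 hφ
      have h2 : φ.1 (T ⊤ a) = ⊥ := by
        rw [φ.2.2.2.2.2.2, Tcan, if_neg hφa]
      have h1 : W.1 c ≤ ⊥ := h2 ▸ hR (W.1 c) (T ⊤ a) le_rfl
      rw [hWh, hWb, himp_eq_top_iff]
      exact h1
    · intro hW
      have hWc : W.1 c = ⊥ := by
        rw [hWh, hWb, himp_eq_top_iff, le_bot_iff] at hW
        exact hW
      obtain ⟨φ, hR, hφa⟩ := exists_phi hA hnt W a hWc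
      exact ⟨φ, hR, (hom_Ttop_himp hnt φ.2 a).2 hφa⟩
  refine ⟨hpart1, ?_, ?_⟩
  · -- τ₁-open
    have hset : {W : HomL T | ∀ φ : HomL T, Rbox Box W.1 φ.1 → φ.1 a = ⊤}
        = ⋃ l : L, ⋃ _ : l ≠ ⊥, bOpen T (T l c) := by
      ext W
      obtain ⟨hWs, hWi, hWh, hWb, hWt, hWT⟩ := W.2
      have hiff := Set.ext_iff.1 hpart1 W
      simp only [Set.mem_setOf_eq] at hiff
      simp only [Set.mem_setOf_eq, Set.mem_iUnion, bOpen]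
      constructor
      · intro h
        have hne : ¬ W.1 (Box (T ⊤ a) ⇨ ⊥) = ⊤ := by
          intro hW
          obtain ⟨φ, hR, hφ⟩ := hiff.2 hW
          exact (hom_Ttop_himp hnt φ.2 a).1 hφ (h φ hR)
        rw [hWh, hWb, himp_eq_top_iff, le_bot_iff] at hne
        exact ⟨W.1 c, hne, by rw [hWT, Tcan_self]⟩
      · rintro ⟨l, hl, hT⟩ φ hR
        rw [hWT] at hT
        have hc1 : W.1 c = l := (Tcan_eq_top_iff hnt).1 hT
        by_contra hφa
        have hW : W.1 (Box (T ⊤ a) ⇨ ⊥) = ⊤ :=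
          hiff.1 ⟨φ, hR, (hom_Ttop_himp hnt φ.2 a).2 hφa⟩
        rw [hWh, hWb, himp_eq_top_iff, le_bot_iff] at hW
        exact hl (hc1.symm.trans hW)
    rw [hset]
    refine @isOpen_iUnion _ _ (tauH1 T) _ fun l => @isOpen_iUnion _ _ (tauH1 T) _ fun hl => ?_
    exact TopologicalSpace.isOpen_generateFrom_of_mem ⟨T l c, rfl⟩
  · -- τ₂-closed
    have hset : {W : HomL T | ∀ φ : HomL T, Rbox Box W.1 φ.1 → φ.1 a = ⊤}
        = bOpen T (T ⊤ (c ⇨ ⊥) ⇨ ⊥) := by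
      ext W
      have hiff := Set.ext_iff.1 hpart1 W
      simp only [Set.mem_setOf_eq] at hiff
      simp only [Set.mem_setOf_eq, bOpen]
      rw [hom_Ttop_himp hnt W.2 (c ⇨ ⊥)]
      constructor
      · intro h hW
        obtain ⟨φ, hR, hφ⟩ := hiff.2 hW
        exact (hom_Ttop_himp hnt φ.2 a).1 hφ (h φ hR)
      · intro hne φ hR
        by_contra hφa
        exact hne (hiff.1 ⟨φ, hR, (hom_Ttop_himp hnt φ.2 a).2 hφa⟩)
    rw [hset]
    refine (@isOpen_compl_iff (HomL T) _ (tauH2 T)).1 ?_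
    exact TopologicalSpace.isOpen_generateFrom_of_mem ⟨T ⊤ (c ⇨ ⊥) ⇨ ⊥, rfl⟩
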